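/- Every principal minor of an invertible totally nonnegative matrix is positive. -/

import Mathlib

/-- A square real matrix is totally nonnegative if all its minors are nonnegative. -/
def TotallyNonneg {n : ℕ} (A : Matrix (Fin n) (Fin n) ℝ) : Prop :=
  ∀ (k : ℕ) (r c : Fin k → Fin n), StrictMono r → StrictMono c →
    0 ≤ (A.submatrix r c).det

namespace TN8

open Matrix Fin Finset Function

/-! ### Basic lemmas about `TotallyNonneg` -/

lemma tn_submatrix {n m : ℕ} {A : Matrix (Fin n) (Fin n) ℝ} (hTN : TotallyNonneg A)
    {f g : Fin m → Fin n} (hf : StrictMono f) (hg : StrictMono g) :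
    TotallyNonneg (A.submatrix f g) := by
  intro k r c hr hc
  rw [Matrix.submatrix_submatrix]
  exact hTN k (f ∘ r) (g ∘ c) (hf.comp hr) (hg.comp hc)

lemma tn_det_nonneg {n : ℕ} {A : Matrix (Fin n) (Fin n) ℝ} (hTN : TotallyNonneg A) :
    0 ≤ A.det := by
  have := hTN n id id strictMono_id strictMono_id
  rwa [Matrix.submatrix_id_id] at this

/-! ### updateCol helpers -/

lemma uc_comm {n : ℕ} (M : Matrix (Fin n) (Fin n) ℝ) {j l : Fin n} (h : j ≠ l)
    (u v : Fin n → ℝ) :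
    (M.updateCol j u).updateCol l v = (M.updateCol l v).updateCol j u := by
  ext a b
  by_cases hbl : b = l <;> by_cases hbj : b = j <;>
    simp_all [Matrix.updateCol_apply]

lemma submatrix_updateCol_inj {m n : ℕ} (A : Matrix (Fin m) (Fin m) ℝ)
    (f : Fin n → Fin m) (g : Fin n → Fin m) (hg : Function.Injective g)
    (l : Fin m) (l' : Fin n) (hl : g l' = l) (v : Fin m → ℝ) :
    (A.updateCol l v).submatrix f g = (A.submatrix f g).updateCol l' (v ∘ f) := by
  ext a b
  simp only [Matrix.submatrix_apply, Matrix.updateCol_apply, Function.comp]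
  rw [← hl]
  simp only [hg.eq_iff]

lemma mul_uc {n : ℕ} (A M : Matrix (Fin n) (Fin n) ℝ) (c : Fin n) (v : Fin n → ℝ) :
    A * (M.updateCol c v) = (A * M).updateCol c (A *ᵥ v) := by
  ext a b
  by_cases hb : b = c <;>
    simp [Matrix.mul_apply, Matrix.updateCol_apply, hb, Matrix.mulVec, dotProduct]

/-! ### the atomic determinant computation -/

lemma det_one_uc_single {n : ℕ} (j l p q : Fin n) (hjl : j ≠ l) :
    Matrix.det (((1 : Matrix (Fin n) (Fin n) ℝ).updateCol j
        (Pi.single p 1)).updateCol l (Pi.single q 1))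
      = (if p = j ∧ q = l then (1:ℝ) else 0) - (if p = l ∧ q = j then 1 else 0) := by
  set M := ((1 : Matrix (Fin n) (Fin n) ℝ).updateCol j
        (Pi.single p 1)).updateCol l (Pi.single q 1) with hMdef
  have hMapp : ∀ a b, M a b = if b = l then (if a = q then (1:ℝ) else 0)
      else if b = j then (if a = p then 1 else 0) else if a = b then 1 else 0 := by
    intro a b
    rw [hMdef]
    simp only [Matrix.updateCol_apply, Pi.single_apply, Matrix.one_apply]
  by_cases hql : q = l
  · by_cases hpj : p = j
    · -- M = 1
      have hM1 : M = 1 := by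
        ext a b
        rw [hMapp, Matrix.one_apply]
        by_cases hbl : b = l <;> by_cases hbj : b = j <;> simp_all
      rw [hM1, Matrix.det_one]
      simp [hpj, hql, hjl]
    · by_cases hpl : p = l
      · have : M.det = 0 := by
          apply Matrix.det_zero_of_column_eq hjl
          intro x
          rw [hMapp, hMapp]
          simp [hjl, hpl, hql]
        rw [this]; simp [hpj, hql, hpl, Ne.symm hjl]
      · have : M.det = 0 := by
          apply Matrix.det_zero_of_column_eq (show j ≠ p from fun h => hpj h.symm)
          intro x
          rw [hMapp, hMapp]
          simp [hjl, Ne.symm hpl, Ne.symm hpj, fun h : p = l => hpl h, fun h : p = j => hpj h]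
        rw [this]; simp [hpj, hpl]
  · by_cases hqj : q = j
    · by_cases hpl : p = l
      · -- swap matrix
        have hM : M = (Equiv.swap j l).permMatrix ℝ := by
          ext a b
          rw [hMapp, show (Equiv.swap j l).permMatrix ℝ a b
              = (1 : Matrix (Fin n) (Fin n) ℝ) ((Equiv.swap j l) a) b from
              congrFun (congrFun (PEquiv.toMatrix_toPEquiv_eq _) a) b, Matrix.one_apply]
          by_cases hbl : b = l <;> by_cases hbj : b = j <;> by_cases haj : a = j <;>
            by_cases hal : a = l <;>
            simp_all [Equiv.swap_apply_def] <;> aesop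
        rw [hM, Matrix.det_permutation, Equiv.Perm.sign_swap hjl]
        simp [hql, hpl, hqj, hjl]
      · by_cases hpj : p = j
        · have : M.det = 0 := by
            apply Matrix.det_zero_of_column_eq hjl
            intro x
            rw [hMapp, hMapp]
            simp [hjl, hpj, hqj]
          rw [this]; simp [hql, hpl]
        · have : M.det = 0 := by
            apply Matrix.det_zero_of_column_eq (show j ≠ p from fun h => hpj h.symm)
            intro x
            rw [hMapp, hMapp]
            simp [hjl, Ne.symm hpl, Ne.symm hpj, fun h : p = l => hpl h, fun h : p = j => hpj h]
          rw [this]; simp [hpj, hpl]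
    · have : M.det = 0 := by
        apply Matrix.det_zero_of_column_eq (show l ≠ q from fun h => hql h.symm)
        intro x
        rw [hMapp, hMapp]
        simp [Ne.symm hjl, Ne.symm hql, Ne.symm hqj, fun h : q = l => hql h,
          fun h : q = j => hqj h]
      rw [this]; simp [hql, hqj]

/-! ### L1: determinant of the identity with two replaced columns -/

lemma det_one_uc_uc {n : ℕ} (j l : Fin n) (hjl : j ≠ l) (u v : Fin n → ℝ) :
    Matrix.det (((1 : Matrix (Fin n) (Fin n) ℝ).updateCol j u).updateCol l v)
      = u j * v l - u l * v j := by
  classical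
  have expand : ∀ (M : Matrix (Fin n) (Fin n) ℝ) (c : Fin n) (w : Fin n → ℝ),
      (M.updateCol c w).det = ∑ q, w q * (M.updateCol c (Pi.single q 1)).det := by
    intro M c w
    have hw : w = ∑ q : Fin n, w q • (Pi.single q 1 : Fin n → ℝ) := by
      funext x
      simp [Pi.single_apply, Finset.sum_ite_eq]
    rw [← Matrix.cramer_apply]
    conv_lhs => rw [hw]
    rw [_root_.map_sum]
    simp only [Finset.sum_apply, _root_.map_smul, Pi.smul_apply, smul_eq_mul,
      Matrix.cramer_apply]
  rw [expand]
  have step : ∀ q : Fin n,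
      (((1 : Matrix (Fin n) (Fin n) ℝ).updateCol j u).updateCol l
        (Pi.single q 1)).det
      = ∑ p, u p * ((if p = j ∧ q = l then (1:ℝ) else 0) - (if p = l ∧ q = j then 1 else 0)) := by
    intro q
    rw [uc_comm _ hjl, expand]
    refine Finset.sum_congr rfl fun p _ => ?_
    rw [uc_comm _ (Ne.symm hjl), det_one_uc_single j l p q hjl]
  simp only [step]
  have inner1 : ∀ q : Fin n,
      (∑ p, u p * (if p = j ∧ q = l then (1:ℝ) else 0)) = if q = l then u j else 0 := by
    intro q
    by_cases h : q = l <;> simp [h, mul_ite, mul_one, mul_zero, Finset.sum_ite_eq']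
  have inner2 : ∀ q : Fin n,
      (∑ p, u p * (if p = l ∧ q = j then (1:ℝ) else 0)) = if q = j then u l else 0 := by
    intro q
    by_cases h : q = j <;> simp [h, mul_ite, mul_one, mul_zero, Finset.sum_ite_eq']
  simp only [mul_sub, Finset.sum_sub_distrib, inner1, inner2]
  simp only [mul_ite, mul_zero, Finset.sum_ite_eq', Finset.mem_univ, if_true]
  ring

/-! ### index arithmetic -/

lemma val_eq_succ {n : ℕ} {i k : Fin (n+2)} {k' : Fin (n+1)}
    (hik : i < k) (hk : i.succAbove k' = k) : (k : ℕ) = (k' : ℕ) + 1 := by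
  rcases lt_or_ge (Fin.castSucc k') i with h | h
  · rw [Fin.succAbove_of_castSucc_lt _ _ h] at hk
    subst hk
    exact absurd hik (lt_asymm h)
  · rw [Fin.succAbove_of_le_castSucc _ _ h] at hk
    subst hk
    rfl

/-! ### L2: double cofactor expansion -/

lemma det_uc_single_pair {n : ℕ} (A : Matrix (Fin (n+2)) (Fin (n+2)) ℝ)
    (i k j l : Fin (n+2)) (k' l' : Fin (n+1))
    (hik : i < k) (hjl : j < l) (hk : i.succAbove k' = k) (hl : j.succAbove l' = l) :
    Matrix.det ((A.updateCol j (Pi.single i 1)).updateCol l (Pi.single k 1))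
      = (-1) ^ ((i:ℕ) + (j:ℕ) + (k:ℕ) + (l:ℕ))
        * Matrix.det (A.submatrix (i.succAbove ∘ k'.succAbove) (j.succAbove ∘ l'.succAbove)) := by
  classical
  set M := (A.updateCol j (Pi.single i 1)).updateCol l (Pi.single k 1) with hM
  have hMcolj : ∀ p, M p j = (Pi.single i 1 : Fin (n+2) → ℝ) p := by
    intro p
    rw [hM, Matrix.updateCol_ne hjl.ne, Matrix.updateCol_self]
  have h1 : M.det = (-1) ^ ((i:ℕ) + (j:ℕ)) * (M.submatrix i.succAbove j.succAbove).det := by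
    rw [Matrix.det_succ_column M j, Fintype.sum_eq_single i]
    · rw [hMcolj, Pi.single_eq_same, mul_one]
    · intro p hp
      rw [hMcolj, Pi.single_eq_of_ne hp, mul_zero, zero_mul]
  have h2 : M.submatrix i.succAbove j.succAbove
      = ((A.submatrix i.succAbove j.succAbove).updateCol l'
          (fun x => (Pi.single k 1 : Fin (n+2) → ℝ) (i.succAbove x))) := by
    rw [hM, uc_comm _ hjl.ne, Matrix.submatrix_updateCol_succAbove]
    exact submatrix_updateCol_inj _ _ _ (Fin.succAbove_right_injective) l l' hl _
  have h3 : (fun x => (Pi.single k 1 : Fin (n+2) → ℝ) (i.succAbove x)) = (Pi.single k' 1 : Fin (n+1) → ℝ) := by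
    funext x
    simp only [Pi.single_apply]
    congr 1
    rw [eq_iff_iff]
    constructor <;> intro h
    · exact Fin.succAbove_right_injective (by rw [h, hk])
    · rw [h, hk]
  set B := A.submatrix i.succAbove j.succAbove with hB
  have h4 : (B.updateCol l' (Pi.single k' 1)).det
      = (-1) ^ ((k':ℕ) + (l':ℕ)) * (B.submatrix k'.succAbove l'.succAbove).det := by
    rw [Matrix.det_succ_column _ l', Fintype.sum_eq_single k']
    · rw [Matrix.updateCol_self, Pi.single_eq_same, mul_one,
        Matrix.submatrix_updateCol_succAbove]
    · intro p hp
      rw [Matrix.updateCol_self, Pi.single_eq_of_ne hp, mul_zero, zero_mul]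
  have h5 : B.submatrix k'.succAbove l'.succAbove
      = A.submatrix (i.succAbove ∘ k'.succAbove) (j.succAbove ∘ l'.succAbove) := by
    rw [hB, Matrix.submatrix_submatrix]
  have hkv : (k : ℕ) = (k' : ℕ) + 1 := val_eq_succ hik hk
  have hlv : (l : ℕ) = (l' : ℕ) + 1 := val_eq_succ hjl hl
  have hsgn : (-1:ℝ)^((i:ℕ)+(j:ℕ)+(k:ℕ)+(l:ℕ))
      = (-1)^((i:ℕ)+(j:ℕ)) * (-1)^((k':ℕ)+(l':ℕ)) := by
    rw [hkv, hlv, show (i:ℕ)+(j:ℕ)+((k':ℕ)+1)+((l':ℕ)+1)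
        = (((i:ℕ)+(j:ℕ)) + ((k':ℕ)+(l':ℕ))) + 2 by ring, pow_add, pow_add]
    norm_num
  rw [h1, h2, h3, h4, h5, hsgn]
  ring

/-! ### the Desnanot–Jacobi / Sylvester identity -/

lemma jacobi {n : ℕ} (A : Matrix (Fin (n+2)) (Fin (n+2)) ℝ) (hA : A.det ≠ 0)
    (i k j l : Fin (n+2)) (k' l' : Fin (n+1))
    (hik : i < k) (hjl : j < l) (hk : i.succAbove k' = k) (hl : j.succAbove l' = l) :
    A.det * (A.submatrix (i.succAbove ∘ k'.succAbove) (j.succAbove ∘ l'.succAbove)).det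
      = (A.submatrix i.succAbove j.succAbove).det * (A.submatrix k.succAbove l.succAbove).det
        - (A.submatrix i.succAbove l.succAbove).det * (A.submatrix k.succAbove j.succAbove).det := by
  classical
  set C : Matrix (Fin (n+2)) (Fin (n+2)) ℝ :=
    ((1 : Matrix (Fin (n+2)) (Fin (n+2)) ℝ).updateCol j
      (fun p => A.adjugate p i)).updateCol l (fun p => A.adjugate p k) with hC
  have hAC : A * C = (A.updateCol j (Pi.single i A.det)).updateCol l
      (Pi.single k A.det) := by
    rw [hC, mul_uc, mul_uc, Matrix.mul_one]
    have e1 : A *ᵥ (fun p => A.adjugate p i) = Pi.single i A.det := by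
      funext a
      have : (A * A.adjugate) a i = (A.det • (1 : Matrix (Fin (n+2)) (Fin (n+2)) ℝ)) a i := by
        rw [Matrix.mul_adjugate]
      simpa [Matrix.mul_apply, Matrix.mulVec, dotProduct, Matrix.one_apply, Pi.single_apply,
        mul_ite, mul_one, mul_zero] using this
    have e2 : A *ᵥ (fun p => A.adjugate p k) = Pi.single k A.det := by
      funext a
      have : (A * A.adjugate) a k = (A.det • (1 : Matrix (Fin (n+2)) (Fin (n+2)) ℝ)) a k := by
        rw [Matrix.mul_adjugate]
      simpa [Matrix.mul_apply, Matrix.mulVec, dotProduct, Matrix.one_apply, Pi.single_apply,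
        mul_ite, mul_one, mul_zero] using this
    rw [e1, e2]
  have hsingle : ∀ (c : Fin (n+2)), (Pi.single c A.det : Fin (n+2) → ℝ)
      = A.det • (Pi.single c 1 : Fin (n+2) → ℝ) := by
    intro c
    funext x
    simp [Pi.single_apply]
  have hdetAC : (A * C).det
      = A.det * (A.det * (((A.updateCol j (Pi.single i 1)).updateCol l
          (Pi.single k 1)).det)) := by
    rw [hAC, hsingle, hsingle, Matrix.det_updateCol_smul]
    rw [uc_comm _ hjl.ne, Matrix.det_updateCol_smul, uc_comm _ (Ne.symm hjl.ne)]
  have hdetC : C.det = (-1) ^ ((i:ℕ) + (j:ℕ) + (k:ℕ) + (l:ℕ))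
      * ((A.submatrix i.succAbove j.succAbove).det * (A.submatrix k.succAbove l.succAbove).det
        - (A.submatrix i.succAbove l.succAbove).det
          * (A.submatrix k.succAbove j.succAbove).det) := by
    rw [hC, det_one_uc_uc j l hjl.ne]
    rw [Matrix.adjugate_fin_succ_eq_det_submatrix, Matrix.adjugate_fin_succ_eq_det_submatrix,
      Matrix.adjugate_fin_succ_eq_det_submatrix, Matrix.adjugate_fin_succ_eq_det_submatrix]
    have s1 : (-1:ℝ) ^ ((i:ℕ) + (j:ℕ)) * (-1) ^ ((k:ℕ) + (l:ℕ))
        = (-1) ^ ((i:ℕ) + (j:ℕ) + (k:ℕ) + (l:ℕ)) := by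
      rw [← pow_add]
      congr 1
      ring
    have s2 : (-1:ℝ) ^ ((i:ℕ) + (l:ℕ)) * (-1) ^ ((k:ℕ) + (j:ℕ))
        = (-1) ^ ((i:ℕ) + (j:ℕ) + (k:ℕ) + (l:ℕ)) := by
      rw [← pow_add]
      congr 1
      ring
    linear_combination (A.submatrix i.succAbove j.succAbove).det
        * (A.submatrix k.succAbove l.succAbove).det * s1
      - (A.submatrix i.succAbove l.succAbove).det
        * (A.submatrix k.succAbove j.succAbove).det * s2
  have hL2 := det_uc_single_pair A i k j l k' l' hik hjl hk hl
  have hmain : (A * C).det = A.det * C.det := Matrix.det_mul A C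
  rw [hdetAC, hL2, hdetC] at hmain
  have hpow : (-1:ℝ) ^ ((i:ℕ) + (j:ℕ) + (k:ℕ) + (l:ℕ)) ≠ 0 := by
    apply pow_ne_zero
    norm_num
  have := mul_left_cancel₀ hA hmain
  -- this : A.det * ((-1)^s * X) = (-1)^s * Y
  set s := (i:ℕ) + (j:ℕ) + (k:ℕ) + (l:ℕ)
  set X := (A.submatrix (i.succAbove ∘ k'.succAbove) (j.succAbove ∘ l'.succAbove)).det
  set Y := (A.submatrix i.succAbove j.succAbove).det * (A.submatrix k.succAbove l.succAbove).det
        - (A.submatrix i.succAbove l.succAbove).det * (A.submatrix k.succAbove j.succAbove).det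
  have h2 : (-1:ℝ)^s * (A.det * X) = (-1)^s * Y := by
    rw [show (-1:ℝ)^s * (A.det * X) = A.det * ((-1)^s * X) by ring, this]
  exact mul_left_cancel₀ hpow h2

/-! ### range of composed succAbove -/

lemma range_sA_comp {n : ℕ} (a : Fin (n+2)) (b : Fin (n+1)) :
    Set.range (a.succAbove ∘ b.succAbove) = ({a, a.succAbove b}ᶜ : Set (Fin (n+2))) := by
  rw [Set.range_comp, Fin.range_succAbove]
  ext y
  simp only [Set.mem_image, Set.mem_compl_iff, Set.mem_insert_iff, Set.mem_singleton_iff,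
    not_or]
  constructor
  · rintro ⟨x, hx, rfl⟩
    exact ⟨Fin.succAbove_ne a x, fun h => hx (Fin.succAbove_right_injective h)⟩
  · rintro ⟨h1, h2⟩
    obtain ⟨x, hx⟩ := Fin.exists_succAbove_eq h1
    exact ⟨x, fun h => h2 (by rw [← hx, h]), hx⟩

/-! ### nonvanishing of the matrix of first cofactors -/

lemma detD_ne {m : ℕ} (A : Matrix (Fin (m+2)) (Fin (m+2)) ℝ) (hA : A.det ≠ 0) :
    (Matrix.of fun p q : Fin (m+2) =>
      (A.submatrix p.succAbove q.succAbove).det).det ≠ 0 := by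
  set E : Matrix (Fin (m+2)) (Fin (m+2)) ℝ :=
    Matrix.diagonal (fun p : Fin (m+2) => (-1:ℝ)^(p:ℕ)) with hE
  have hfact : (Matrix.of fun p q : Fin (m+2) =>
      (A.submatrix p.succAbove q.succAbove).det) = E * (A.adjugate)ᵀ * E := by
    ext p q
    rw [Matrix.mul_diagonal, Matrix.diagonal_mul, Matrix.transpose_apply,
      Matrix.adjugate_fin_succ_eq_det_submatrix]
    have : (-1:ℝ)^(p:ℕ) * ((-1)^((p:ℕ)+(q:ℕ))
        * (A.submatrix p.succAbove q.succAbove).det) * (-1)^(q:ℕ)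
        = ((-1)^((p:ℕ)+(q:ℕ)) * (-1)^((p:ℕ)+(q:ℕ)))
          * (A.submatrix p.succAbove q.succAbove).det := by
      ring
    rw [Matrix.of_apply, this, ← pow_add, Even.neg_one_pow ⟨(p:ℕ)+(q:ℕ), by ring⟩, one_mul]
  rw [hfact, Matrix.det_mul, Matrix.det_mul, Matrix.det_transpose, Matrix.det_adjugate]
  have hEdet : E.det ≠ 0 := by
    rw [hE, Matrix.det_diagonal]
    exact Finset.prod_ne_zero_iff.mpr (fun p _ => pow_ne_zero _ (by norm_num))
  exact mul_ne_zero (mul_ne_zero hEdet (pow_ne_zero _ hA)) hEdet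

/-! ### helper: succAbove to the last element -/

lemma sA_last {m : ℕ} (i : Fin (m+2)) (hi : i ≠ Fin.last (m+1)) :
    i.succAbove (Fin.last m) = Fin.last (m+1) := by
  rw [Fin.succAbove_of_le_castSucc, Fin.succ_last]
  have : (i : ℕ) < m + 1 := by
    have := Fin.lt_last_iff_ne_last.mpr hi
    exact this
  simp [Fin.le_def]
  omega

/-! ### the key step: every first principal cofactor is positive -/

lemma key_lemma {m : ℕ} (A : Matrix (Fin (m+1)) (Fin (m+1)) ℝ) (hTN : TotallyNonneg A)
    (hdet : 0 < A.det)
    (IH : ∀ m' : ℕ, m' < m + 1 → ∀ B : Matrix (Fin m') (Fin m') ℝ, TotallyNonneg B →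
      B.det ≠ 0 → ∀ (k : ℕ) (r : Fin k → Fin m'), StrictMono r → 0 < (B.submatrix r r).det) :
    ∀ q : Fin (m+1), 0 < (A.submatrix q.succAbove q.succAbove).det := by
  cases m with
  | zero =>
    intro q
    simp [Matrix.det_fin_zero]
  | succ m' =>
    set L : Fin (m'+2) := Fin.last (m'+1) with hL
    have hD0 : ∀ p q : Fin (m'+2), 0 ≤ (A.submatrix p.succAbove q.succAbove).det :=
      fun p q => hTN _ _ _ (Fin.strictMono_succAbove p) (Fin.strictMono_succAbove q)
    have hsAl : ∀ i : Fin (m'+2), i ≠ L → i.succAbove (Fin.last m') = L :=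
      fun i hi => sA_last i hi
    have step1 : 0 < (A.submatrix L.succAbove L.succAbove).det := by
      rcases (hD0 L L).eq_or_lt with h0 | h
      swap
      · exact h
      exfalso
      have hprod : ∀ i jj : Fin (m'+2),
          (A.submatrix i.succAbove L.succAbove).det
            * (A.submatrix L.succAbove jj.succAbove).det = 0 := by
        intro i jj
        rcases eq_or_ne i L with rfl | hi
        · rw [← h0, zero_mul]
        rcases eq_or_ne jj L with rfl | hjj
        · rw [← h0, mul_zero]
        have hiL : i < L := Fin.lt_last_iff_ne_last.mpr hi
        have hjL : jj < L := Fin.lt_last_iff_ne_last.mpr hjj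
        have hjac := jacobi A hdet.ne' i L jj L (Fin.last m') (Fin.last m')
          hiL hjL (hsAl i hi) (hsAl jj hjj)
        rw [← h0, mul_zero, zero_sub] at hjac
        have hminor : 0 ≤ (A.submatrix (i.succAbove ∘ (Fin.last m').succAbove)
            (jj.succAbove ∘ (Fin.last m').succAbove)).det :=
          hTN _ _ _ ((Fin.strictMono_succAbove i).comp (Fin.strictMono_succAbove (Fin.last m')))
            ((Fin.strictMono_succAbove jj).comp (Fin.strictMono_succAbove (Fin.last m')))
        have h1 : 0 ≤ A.det * (A.submatrix (i.succAbove ∘ (Fin.last m').succAbove)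
            (jj.succAbove ∘ (Fin.last m').succAbove)).det := mul_nonneg hdet.le hminor
        have h2 : 0 ≤ (A.submatrix i.succAbove L.succAbove).det
            * (A.submatrix L.succAbove jj.succAbove).det :=
          mul_nonneg (hD0 i L) (hD0 L jj)
        linarith
      have hDne := detD_ne A hdet.ne'
      by_cases hc : ∀ i, (Matrix.of fun p q : Fin (m'+2) =>
          (A.submatrix p.succAbove q.succAbove).det) i L = 0
      · exact hDne (Matrix.det_eq_zero_of_column_eq_zero L hc)
      · push_neg at hc
        obtain ⟨i0, hi0⟩ := hc
        have hrow : ∀ jj, (Matrix.of fun p q : Fin (m'+2) =>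
            (A.submatrix p.succAbove q.succAbove).det) L jj = 0 := by
          intro jj
          rcases mul_eq_zero.mp (hprod i0 jj) with h | h
          · exact absurd h hi0
          · exact h
        exact hDne (Matrix.det_eq_zero_of_row_eq_zero L hrow)
    intro q
    rcases eq_or_ne q L with rfl | hq
    · exact step1
    have hqL : q < L := Fin.lt_last_iff_ne_last.mpr hq
    set q' : Fin (m'+1) := q.castPred hq with hq'
    have hBpos := IH (m'+1) (Nat.lt_succ_self _) (A.submatrix L.succAbove L.succAbove)
      (tn_submatrix hTN (Fin.strictMono_succAbove L) (Fin.strictMono_succAbove L))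
      step1.ne' m' q'.succAbove (Fin.strictMono_succAbove q')
    rw [Matrix.submatrix_submatrix] at hBpos
    have hmaps : L.succAbove ∘ q'.succAbove = q.succAbove ∘ (Fin.last m').succAbove := by
      haveI : WellFoundedLT (Fin m') := by infer_instance
      apply (StrictMono.range_inj
        ((Fin.strictMono_succAbove L).comp (Fin.strictMono_succAbove q'))
        ((Fin.strictMono_succAbove q).comp (Fin.strictMono_succAbove (Fin.last m')))).mp
      rw [range_sA_comp, range_sA_comp, hsAl q hq,
        show L.succAbove q' = q by rw [hL, Fin.succAbove_last, hq', Fin.castSucc_castPred],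
        Set.pair_comm]
    rw [hmaps] at hBpos
    have hjac := jacobi A hdet.ne' q L q L (Fin.last m') (Fin.last m')
      hqL hqL (hsAl q hq) (hsAl q hq)
    have h1 : 0 < (A.submatrix q.succAbove q.succAbove).det
        * (A.submatrix L.succAbove L.succAbove).det := by
      have hp := mul_pos hdet hBpos
      have hn := mul_nonneg (hD0 q L) (hD0 L q)
      linarith
    rcases (hD0 q q).eq_or_lt with h | h
    · rw [← h, zero_mul] at h1
      exact absurd h1 (lt_irrefl 0)
    · exact h

/-! ### the main induction -/

lemma main : ∀ (n : ℕ) (A : Matrix (Fin n) (Fin n) ℝ), TotallyNonneg A → A.det ≠ 0 →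
    ∀ (k : ℕ) (r : Fin k → Fin n), StrictMono r → 0 < (A.submatrix r r).det := by
  intro n
  induction n using Nat.strong_induction_on with
  | _ n IH =>
  intro A hTN hinv k r hr
  have hdet : 0 < A.det := lt_of_le_of_ne (tn_det_nonneg hTN) (Ne.symm hinv)
  by_cases hsurj : Function.Surjective r
  · -- r is the identity
    have hkn : k = n := by
      have h1 : k ≤ n := by
        simpa using Fintype.card_le_of_injective r hr.injective
      have h2 : n ≤ k := by
        simpa using Fintype.card_le_of_surjective r hsurj
      omega
    subst hkn
    have : r = id := by
      have hrange : Set.range r = Set.range (id : Fin k → Fin k) := by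
        rw [Set.range_id, Set.range_eq_univ.mpr hsurj]
      haveI : WellFoundedLT (Fin k) := by infer_instance
      exact (hr.range_inj (strictMono_id (α := Fin k))).mp hrange
    rw [this, Matrix.submatrix_id_id]
    exact hdet
  · obtain ⟨j, hj⟩ : ∃ j, ∀ a, r a ≠ j := by
      simp only [Function.Surjective, not_forall] at hsurj
      obtain ⟨b, hb⟩ := hsurj
      exact ⟨b, fun a h => hb ⟨a, h⟩⟩
    cases n with
    | zero => exact j.elim0
    | succ m =>
      have key : ∀ q : Fin (m+1), 0 < (A.submatrix q.succAbove q.succAbove).det :=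
        key_lemma A hTN hdet IH
      choose r' hr' using fun a => Fin.exists_succAbove_eq (hj a)
      have hr'm : StrictMono r' := by
        intro a b hab
        have : j.succAbove (r' a) < j.succAbove (r' b) := by
          rw [hr' a, hr' b]
          exact hr hab
        exact (Fin.strictMono_succAbove j).lt_iff_lt.mp this
      have hreq : r = j.succAbove ∘ r' := funext fun a => (hr' a).symm
      rw [hreq, ← Matrix.submatrix_submatrix]
      exact IH m (Nat.lt_succ_self m) _
        (tn_submatrix hTN (Fin.strictMono_succAbove j) (Fin.strictMono_succAbove j))
        (ne_of_gt (key j)) k r' hr'm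

end TN8

theorem stmt8 {n : ℕ} (A : Matrix (Fin n) (Fin n) ℝ)
    (hTN : TotallyNonneg A) (hinv : A.det ≠ 0) :
    ∀ (k : ℕ) (r : Fin k → Fin n), StrictMono r → 0 < (A.submatrix r r).det :=
  TN8.main n A hTN hinv
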